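/- Let n ≥ 3 be an integer, R_* > 1, let ρ be a regular metric on [1,R_*], and let c be a real number with 0 ≤ c ≤ ρ(1). Then for every t ∈ [1,R_*] there exists exactly one η ∈ [0,1] satisfying (1 + η²/(n−1))^{(n−2)/2}·(1 − η²) = c/(ρ(t)·t^n). -/

import Mathlib

/-- A `C¹` function `ρ : [1,R₁] → (0,∞)` is a *regular metric* if `s ↦ ρ(s)sⁿ`
is nondecreasing on `[1,R₁]` (so its minimum is `ρ(1)`). -/
def IsRegularMetric (n : ℕ) (R₁ : ℝ) (ρ : ℝ → ℝ) : Prop :=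
  ContDiffOn ℝ 1 ρ (Set.Icc 1 R₁) ∧ (∀ s ∈ Set.Icc 1 R₁, 0 < ρ s) ∧
    MonotoneOn (fun s => ρ s * s ^ n) (Set.Icc 1 R₁)

lemma stmt6_aux (n : ℕ) (hn : 3 ≤ n) (d : ℝ) (hd0 : 0 ≤ d) (hd1 : d ≤ 1) :
    ∃! η : ℝ, η ∈ Set.Icc (0:ℝ) 1 ∧
      (1 + η ^ 2 / ((n : ℝ) - 1)) ^ (((n : ℝ) - 2) / 2) * (1 - η ^ 2) = d := by
  have hn3 : (3:ℝ) ≤ (n:ℝ) := by exact_mod_cast hn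
  have hn1 : (0:ℝ) < (n:ℝ) - 1 := by linarith
  set p : ℝ := ((n : ℝ) - 2) / 2 with hp
  have hppos : 0 < p := by rw [hp]; linarith
  set F : ℝ → ℝ := fun η => (1 + η ^ 2 / ((n : ℝ) - 1)) ^ p * (1 - η ^ 2) with hFdef
  have hB1 : ∀ η : ℝ, (1:ℝ) ≤ 1 + η ^ 2 / ((n : ℝ) - 1) := by
    intro η
    have := div_nonneg (sq_nonneg η) hn1.le
    linarith
  have hBpos : ∀ η : ℝ, (0:ℝ) < 1 + η ^ 2 / ((n : ℝ) - 1) := fun η => lt_of_lt_of_le one_pos (hB1 η)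
  have hcont : Continuous F := by
    apply Continuous.mul
    · apply Continuous.rpow_const
      · continuity
      · intro x; exact Or.inl (hBpos x).ne'
    · continuity
  have hanti : StrictAntiOn F (Set.Icc (0:ℝ) 1) := by
    apply strictAntiOn_of_deriv_neg (convex_Icc 0 1) hcont.continuousOn
    intro η hη
    rw [interior_Icc] at hη
    obtain ⟨hη0, hη1⟩ := hη
    set B : ℝ := 1 + η ^ 2 / ((n : ℝ) - 1) with hBdef
    have h1 : HasDerivAt (fun x : ℝ => 1 + x ^ 2 / ((n : ℝ) - 1)) (2 * η / ((n : ℝ) - 1)) η := by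
      have := ((hasDerivAt_pow 2 η).div_const ((n:ℝ)-1)).const_add 1
      refine this.congr_deriv ?_
      push_cast; ring
    have h2 : HasDerivAt (fun x : ℝ => (1 + x ^ 2 / ((n : ℝ) - 1)) ^ p)
        (2 * η / ((n : ℝ) - 1) * p * B ^ (p - 1)) η :=
      h1.rpow_const (Or.inl (hBpos η).ne')
    have h3 : HasDerivAt (fun x : ℝ => 1 - x ^ 2) (-(2 * η)) η := by
      have := (hasDerivAt_pow 2 η).const_sub 1
      refine this.congr_deriv ?_
      push_cast; ring
    have hF' : HasDerivAt F
        (2 * η / ((n : ℝ) - 1) * p * B ^ (p - 1) * (1 - η ^ 2) + B ^ p * (-(2 * η))) η :=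
      h2.mul h3
    rw [hF'.deriv]
    have hrpos : 0 < B ^ (p - 1) := Real.rpow_pos_of_pos (hBpos η) _
    have hsplit : B ^ p = B ^ (p - 1) * B := by
      rw [← Real.rpow_add_one (hBpos η).ne' (p - 1)]
      congr 1
      ring
    rw [hsplit]
    have heq : 2 * η / ((n : ℝ) - 1) * p * B ^ (p - 1) * (1 - η ^ 2) + B ^ (p - 1) * B * (-(2 * η))
        = 2 * η * B ^ (p - 1) * (p * (1 - η ^ 2) / ((n : ℝ) - 1) - B) := by ring
    rw [heq]
    apply mul_neg_of_pos_of_neg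
    · positivity
    · have key : p * (1 - η ^ 2) / ((n : ℝ) - 1) < 1 := by
        rw [div_lt_one hn1]
        nlinarith [sq_nonneg η]
      have := hB1 η
      linarith
  have hF0 : F 0 = 1 := by
    simp [hFdef, Real.one_rpow]
  have hF1 : F 1 = 0 := by
    simp [hFdef]
  have hIVT := intermediate_value_Icc' (zero_le_one (α := ℝ)) hcont.continuousOn
  have hd : d ∈ Set.Icc (F 1) (F 0) := by rw [hF0, hF1]; exact ⟨hd0, hd1⟩
  obtain ⟨η, hηmem, hFη⟩ := hIVT hd
  exact ⟨η, ⟨hηmem, hFη⟩, fun y ⟨hy, hFy⟩ => hanti.injOn hy hηmem (hFy.trans hFη.symm)⟩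

/-- For a regular metric `ρ` on `[1,R_*]` and `0 ≤ c ≤ ρ(1)`, for every
`t ∈ [1,R_*]` there is exactly one `η ∈ [0,1]` with
`(1 + η²/(n-1))^{(n-2)/2} (1 - η²) = c/(ρ(t)tⁿ)`. -/
theorem stmt6 (n : ℕ) (hn : 3 ≤ n) (Rs : ℝ) (hRs : 1 < Rs)
    (ρ : ℝ → ℝ) (hρ : IsRegularMetric n Rs ρ)
    (c : ℝ) (hc0 : 0 ≤ c) (hc1 : c ≤ ρ 1) :
    ∀ t ∈ Set.Icc 1 Rs, ∃! η : ℝ, η ∈ Set.Icc (0:ℝ) 1 ∧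
      (1 + η ^ 2 / ((n : ℝ) - 1)) ^ (((n : ℝ) - 2) / 2) * (1 - η ^ 2)
        = c / (ρ t * t ^ n) := by
  obtain ⟨-, hpos, hmono⟩ := hρ
  intro t ht
  have hρt : 0 < ρ t := hpos t ht
  have ht1 : (1:ℝ) ≤ t := ht.1
  have htpos : (0:ℝ) < t := lt_of_lt_of_le one_pos ht1
  have hden : 0 < ρ t * t ^ n := by positivity
  have hm : ρ 1 * 1 ^ n ≤ ρ t * t ^ n :=
    hmono ⟨le_refl 1, hRs.le⟩ ht ht1
  simp only [one_pow, mul_one] at hm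
  have hd0 : 0 ≤ c / (ρ t * t ^ n) := div_nonneg hc0 hden.le
  have hd1 : c / (ρ t * t ^ n) ≤ 1 := by
    rw [div_le_one hden]; linarith
  exact stmt6_aux n hn _ hd0 hd1
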